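/- For all integers n ≥ 1 and k with 1 ≤ k ≤ n-1, setting x = k/n, the binomial coefficient satisfies (1/(2√2))·√(n/(k(n-k)))·exp(n·h(x)) ≤ C(n,k) ≤ (1/√(2π))·√(n/(k(n-k)))·exp(n·h(x)), where h(x) = -x·log x - (1-x)·log(1-x) is the binary entropy. -/

import Mathlib

/-- The binary entropy function `h(x) = -x log x - (1-x) log(1-x)`. -/
noncomputable def binEnt (x : ℝ) : ℝ := -x * Real.log x - (1 - x) * Real.log (1 - x)

open Stirling Real


lemma sqrt_pi_le_stirlingSeq (n : ℕ) (hn : 1 ≤ n) : Real.sqrt π ≤ stirlingSeq n := by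
  obtain ⟨m, rfl⟩ := Nat.exists_eq_add_of_le hn
  have h1 : Filter.Tendsto (stirlingSeq ∘ Nat.succ) Filter.atTop (nhds (Real.sqrt π)) :=
    tendsto_stirlingSeq_sqrt_pi.comp (Filter.tendsto_add_atTop_nat 1)
  have := stirlingSeq'_antitone.le_of_tendsto h1 m
  simpa [Nat.succ_eq_add_one, Nat.add_comm] using this

lemma stirling_anti {a b : ℕ} (ha : 1 ≤ a) (hab : a ≤ b) : stirlingSeq b ≤ stirlingSeq a := by
  obtain ⟨a, rfl⟩ := Nat.exists_eq_add_of_le ha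
  obtain ⟨c, rfl⟩ := Nat.exists_eq_add_of_le hab
  have := stirlingSeq'_antitone (Nat.le_add_right a c)
  simpa [Function.comp, Nat.succ_eq_add_one, Nat.add_comm, Nat.add_assoc, Nat.add_left_comm] using this

lemma stirling_pos (n : ℕ) (hn : 1 ≤ n) : 0 < stirlingSeq n := by
  obtain ⟨m, rfl⟩ := Nat.exists_eq_add_of_le hn
  simpa [Nat.add_comm] using stirlingSeq'_pos m

lemma stirlingSeq_two : stirlingSeq 2 = Real.exp 1 ^ 2 / 4 := by
  rw [stirlingSeq]
  have hf : ((Nat.factorial 2 : ℕ) : ℝ) = 2 := by norm_num [Nat.factorial]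
  rw [hf, show (2 * ((2:ℕ):ℝ)) = 4 by norm_num,
    show Real.sqrt 4 = 2 by rw [show (4:ℝ) = 2^2 by norm_num, Real.sqrt_sq]; norm_num, div_pow]
  have := Real.exp_pos 1
  field_simp; ring

lemma stirlingSeq_three : stirlingSeq 3 = 2 * Real.exp 1 ^ 3 / (9 * Real.sqrt 6) := by
  rw [stirlingSeq]
  have hf : ((Nat.factorial 3 : ℕ) : ℝ) = 6 := by norm_num [Nat.factorial]
  rw [hf, show (2 * ((3:ℕ):ℝ)) = 6 by norm_num, div_pow]
  have e := Real.exp_pos 1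
  have s6 : (0:ℝ) < Real.sqrt 6 := Real.sqrt_pos.mpr (by norm_num)
  have s6sq : Real.sqrt 6 ^ 2 = 6 := Real.sq_sqrt (by norm_num)
  field_simp
  norm_num

lemma e8_bound : Real.exp 1 ^ 8 ≤ 972 * π := by
  have h1 : Real.exp 1 ^ 8 < 2.7182818286 ^ 8 :=
    pow_lt_pow_left₀ Real.exp_one_lt_d9 (le_of_lt (Real.exp_pos 1)) (by norm_num)
  have h2 : (3.141592 : ℝ) < π := Real.pi_gt_d6
  nlinarith [h1, h2]

lemma one_three_bound : stirlingSeq 1 * stirlingSeq 3 ≤ 2 * Real.sqrt π := by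
  rw [stirlingSeq_one, stirlingSeq_three]
  have e := Real.exp_pos 1
  have s2p : (0:ℝ) < Real.sqrt 2 := Real.sqrt_pos.mpr (by norm_num)
  have s6p : (0:ℝ) < Real.sqrt 6 := Real.sqrt_pos.mpr (by norm_num)
  have h12 : Real.sqrt 2 * Real.sqrt 6 = Real.sqrt 12 := by
    rw [← Real.sqrt_mul (by norm_num)]; norm_num
  have key : Real.exp 1 ^ 4 / 9 ≤ Real.sqrt 12 * Real.sqrt π := by
    rw [← Real.sqrt_mul (by norm_num)]
    rw [Real.le_sqrt (by positivity) (by positivity)]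
    have := e8_bound
    rw [div_pow]
    rw [div_le_iff₀ (by norm_num)]
    nlinarith [Real.pi_pos]
  rw [div_mul_div_comm, div_le_iff₀ (by positivity)]
  calc Real.exp 1 * (2 * Real.exp 1 ^ 3) = 18 * (Real.exp 1 ^ 4 / 9) := by ring
    _ ≤ 18 * (Real.sqrt 12 * Real.sqrt π) := by linarith [key]
    _ = 2 * Real.sqrt π * (Real.sqrt 2 * (9 * Real.sqrt 6)) := by rw [← h12]; ring

lemma two_two_bound : stirlingSeq 2 * stirlingSeq 2 ≤ 2 * Real.sqrt π := by
  rw [stirlingSeq_two]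
  have e := Real.exp_pos 1
  have key : Real.exp 1 ^ 4 / 32 ≤ Real.sqrt π := by
    rw [show Real.sqrt π = Real.sqrt π from rfl, Real.le_sqrt (by positivity) Real.pi_pos.le]
    have := e8_bound
    rw [div_pow, div_le_iff₀ (by norm_num)]
    nlinarith [Real.pi_pos]
  calc Real.exp 1 ^ 2 / 4 * (Real.exp 1 ^ 2 / 4) = Real.exp 1 ^ 4 / 16 := by ring
    _ = 2 * (Real.exp 1 ^ 4 / 32) := by ring
    _ ≤ 2 * Real.sqrt π := by linarith [key]

lemma key_ineq (k m : ℕ) (hk : 1 ≤ k) (hm : 1 ≤ m) :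
    stirlingSeq k * stirlingSeq m ≤ 2 * stirlingSeq (k + m) := by
  have e := Real.exp_pos 1
  have hsp : 0 < Real.sqrt π := Real.sqrt_pos.mpr Real.pi_pos
  wlog hkm : k ≤ m generalizing k m
  · rw [mul_comm, Nat.add_comm]; exact this m k hm hk (le_of_not_ge hkm)
  rcases Nat.lt_or_ge k 2 with hk2 | hk2
  · interval_cases k
    rcases Nat.lt_or_ge m 3 with hm3 | hm3
    · interval_cases m
      · -- (1,1)
        rw [stirlingSeq_one, show (1+1 : ℕ) = 2 from rfl, stirlingSeq_two]
        rw [div_mul_div_comm, Real.mul_self_sqrt (by norm_num)]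
        rw [div_le_iff₀ (by norm_num)]
        nlinarith
      · -- (1,2)
        rw [stirlingSeq_one, stirlingSeq_two, show (1+2 : ℕ) = 3 from rfl, stirlingSeq_three]
        have s2p : (0:ℝ) < Real.sqrt 2 := Real.sqrt_pos.mpr (by norm_num)
        have s6p : (0:ℝ) < Real.sqrt 6 := Real.sqrt_pos.mpr (by norm_num)
        have h26 : 9 * Real.sqrt 6 ≤ 16 * Real.sqrt 2 := by
          have h1 : (9:ℝ) * Real.sqrt 6 = Real.sqrt 486 := by
            rw [show (486:ℝ) = 9^2 * 6 by norm_num, Real.sqrt_mul (by positivity),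
              Real.sqrt_sq (by norm_num)]
          have h2 : (16:ℝ) * Real.sqrt 2 = Real.sqrt 512 := by
            rw [show (512:ℝ) = 16^2 * 2 by norm_num, Real.sqrt_mul (by positivity),
              Real.sqrt_sq (by norm_num)]
          rw [h1, h2]
          exact Real.sqrt_le_sqrt (by norm_num)
        rw [div_mul_div_comm, mul_div_assoc', div_le_div_iff₀ (by positivity) (by positivity)]
        nlinarith [h26, pow_pos e 3]
    · -- (1, m≥3)
      have h1 : stirlingSeq m ≤ stirlingSeq 3 := stirling_anti (by norm_num) hm3
      have h2 : Real.sqrt π ≤ stirlingSeq (1 + m) := sqrt_pi_le_stirlingSeq _ (by omega)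
      calc stirlingSeq 1 * stirlingSeq m ≤ stirlingSeq 1 * stirlingSeq 3 :=
            mul_le_mul_of_nonneg_left h1 (stirling_pos 1 le_rfl).le
        _ ≤ 2 * Real.sqrt π := one_three_bound
        _ ≤ 2 * stirlingSeq (1 + m) := by linarith
  · have h1 : stirlingSeq k ≤ stirlingSeq 2 := stirling_anti (by norm_num) hk2
    have h2 : stirlingSeq m ≤ stirlingSeq 2 := stirling_anti (by norm_num) (le_trans hk2 hkm)
    have h3 : Real.sqrt π ≤ stirlingSeq (k + m) := sqrt_pi_le_stirlingSeq _ (by omega)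
    calc stirlingSeq k * stirlingSeq m ≤ stirlingSeq 2 * stirlingSeq 2 :=
          mul_le_mul h1 h2 (stirling_pos m hm).le (stirling_pos 2 (by norm_num)).le
      _ ≤ 2 * Real.sqrt π := two_two_bound
      _ ≤ 2 * stirlingSeq (k + m) := by linarith


lemma exp_binEnt (k m n : ℕ) (hk : 1 ≤ k) (hm : 1 ≤ m) (hn : n = k + m) :
    Real.exp ((n:ℝ) * binEnt ((k:ℝ) / n)) =
      (n:ℝ) ^ n / ((k:ℝ) ^ k * (m:ℝ) ^ m) := by
  have hK : (0:ℝ) < k := by exact_mod_cast hk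
  have hM : (0:ℝ) < m := by exact_mod_cast hm
  have hN : (0:ℝ) < n := by rw [hn]; push_cast; linarith
  have hKM : (n:ℝ) = (k:ℝ) + m := by rw [hn]; push_cast; ring
  have h1 : 1 - (k:ℝ)/n = (m:ℝ)/n := by field_simp [hN.ne']; linarith
  have h2 : (n:ℝ) * binEnt ((k:ℝ)/n) =
      (n:ℝ) * Real.log n - k * Real.log k - m * Real.log m := by
    rw [binEnt, h1, Real.log_div hK.ne' hN.ne', Real.log_div hM.ne' hN.ne']
    field_simp
    linear_combination (-Real.log n) * hKM
  rw [h2, Real.exp_sub, Real.exp_sub, Real.exp_nat_mul, Real.exp_nat_mul, Real.exp_nat_mul,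
    Real.exp_log hN, Real.exp_log hK, Real.exp_log hM, div_div]

lemma choose_formula (k m n : ℕ) (hk : 1 ≤ k) (hm : 1 ≤ m) (hn : n = k + m) :
    (n.choose k : ℝ) = stirlingSeq n / (stirlingSeq k * stirlingSeq m) *
      (Real.sqrt ((n:ℝ) / ((k:ℝ) * m)) / Real.sqrt 2) *
      Real.exp ((n:ℝ) * binEnt ((k:ℝ) / n)) := by
  have hK : (0:ℝ) < k := by exact_mod_cast hk
  have hM : (0:ℝ) < m := by exact_mod_cast hm
  have hN : (0:ℝ) < n := by rw [hn]; push_cast; linarith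
  have e := Real.exp_pos 1
  have sK := Real.sqrt_pos.mpr (by linarith : (0:ℝ) < 2 * k)
  have sM := Real.sqrt_pos.mpr (by linarith : (0:ℝ) < 2 * m)
  have sN := Real.sqrt_pos.mpr (by linarith : (0:ℝ) < 2 * n)
  have spK := stirling_pos k hk
  have spM := stirling_pos m hm
  have spN := stirling_pos n (by omega)
  -- factorial expansions
  have hfac : ∀ j : ℕ, 1 ≤ j → (Nat.factorial j : ℝ) =
      stirlingSeq j * (Real.sqrt (2 * j) * ((j:ℝ) / Real.exp 1) ^ j) := by
    intro j hj
    have hJ : (0:ℝ) < j := by exact_mod_cast hj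
    rw [stirlingSeq, div_mul_cancel₀]
    positivity
  have hchoose : (n.choose k : ℝ) * (Nat.factorial k : ℝ) * (Nat.factorial m : ℝ) = (Nat.factorial n : ℝ) := by
    have := Nat.choose_mul_factorial_mul_factorial (show k ≤ n by omega)
    rw [show n - k = m by omega] at this
    exact_mod_cast congrArg (Nat.cast : ℕ → ℝ) this
  have hC : (n.choose k : ℝ) = (Nat.factorial n : ℝ) / ((Nat.factorial k : ℝ) * (Nat.factorial m : ℝ)) := by
    rw [eq_div_iff (by positivity)]; linarith [hchoose]
  -- sqrt part
  have hsq : Real.sqrt ((n:ℝ) / ((k:ℝ) * m)) / Real.sqrt 2 =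
      Real.sqrt (2 * (n:ℝ)) / (Real.sqrt (2 * (k:ℝ)) * Real.sqrt (2 * (m:ℝ))) := by
    rw [Real.sqrt_div hN.le, Real.sqrt_mul (by norm_num : (0:ℝ) ≤ 2),
      Real.sqrt_mul (by norm_num : (0:ℝ) ≤ 2), Real.sqrt_mul (by norm_num : (0:ℝ) ≤ 2),
      Real.sqrt_mul hK.le]
    have s2 := Real.sqrt_pos.mpr (by norm_num : (0:ℝ) < 2)
    have ssK := Real.sqrt_pos.mpr hK
    have ssM := Real.sqrt_pos.mpr hM
    field_simp
  rw [hC, hfac n (by omega), hfac k hk, hfac m hm, exp_binEnt k m n hk hm hn, hsq]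
  have hpow : Real.exp 1 ^ n = Real.exp 1 ^ k * Real.exp 1 ^ m := by
    rw [hn, pow_add]
  rw [div_pow, div_pow, div_pow]
  field_simp
  have hexp : Real.exp ((k:ℝ)) * Real.exp ((m:ℝ)) = Real.exp ((n:ℝ)) := by
    rw [← Real.exp_add]; congr 1; rw [hn]; push_cast; ring
  rw [hpow]

/-- Entropic estimates for binomial coefficients: for `1 ≤ k ≤ n-1` and
`x = k/n`,
`(1/(2√2)) √(n/(k(n-k))) exp(n h(x)) ≤ C(n,k) ≤ (1/√(2π)) √(n/(k(n-k))) exp(n h(x))`. -/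
theorem binomial_entropy_bounds (n k : ℕ) (hk : 1 ≤ k) (hkn : k ≤ n - 1)
    (hn : 1 ≤ n) :
    (1 / (2 * Real.sqrt 2)) * Real.sqrt ((n : ℝ) / (k * (n - k))) *
        Real.exp (n * binEnt ((k : ℝ) / n)) ≤ (Nat.choose n k : ℝ) ∧
    (Nat.choose n k : ℝ) ≤
      (1 / Real.sqrt (2 * Real.pi)) * Real.sqrt ((n : ℝ) / (k * (n - k))) *
        Real.exp (n * binEnt ((k : ℝ) / n)) := by
  have hn2 : 2 ≤ n := by omega
  set m := n - k with hmdef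
  have hm1 : 1 ≤ m := by omega
  have hnkm : n = k + m := by omega
  have hK : (0:ℝ) < k := by exact_mod_cast hk
  have hM : (0:ℝ) < m := by exact_mod_cast hm1
  have hN : (0:ℝ) < n := by exact_mod_cast hn
  have hMc : (n:ℝ) - k = (m:ℝ) := by rw [hnkm]; push_cast; ring
  rw [hMc]
  have hC := choose_formula k m n hk hm1 hnkm
  have hR : 0 < Real.sqrt ((n:ℝ)/((k:ℝ)*m)) := Real.sqrt_pos.mpr (by positivity)
  have hE := Real.exp_pos ((n:ℝ) * binEnt ((k:ℝ)/n))
  have s2p : (0:ℝ) < Real.sqrt 2 := Real.sqrt_pos.mpr (by norm_num)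
  have hsp : (0:ℝ) < Real.sqrt π := Real.sqrt_pos.mpr Real.pi_pos
  have spK := stirling_pos k hk
  have spM := stirling_pos m hm1
  have spN := stirling_pos n hn
  constructor
  · have hQ : (1:ℝ)/2 ≤ stirlingSeq n / (stirlingSeq k * stirlingSeq m) := by
      rw [le_div_iff₀ (by positivity)]
      have := key_ineq k m hk hm1
      rw [← hnkm] at this
      linarith
    calc (1 / (2 * Real.sqrt 2)) * Real.sqrt ((n:ℝ)/((k:ℝ)*m)) *
          Real.exp ((n:ℝ) * binEnt ((k:ℝ)/n))
        = (1/2) * (Real.sqrt ((n:ℝ)/((k:ℝ)*m)) / Real.sqrt 2) *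
          Real.exp ((n:ℝ) * binEnt ((k:ℝ)/n)) := by field_simp
      _ ≤ stirlingSeq n / (stirlingSeq k * stirlingSeq m) *
          (Real.sqrt ((n:ℝ)/((k:ℝ)*m)) / Real.sqrt 2) *
          Real.exp ((n:ℝ) * binEnt ((k:ℝ)/n)) := by gcongr
      _ = (n.choose k : ℝ) := hC.symm
  · have hQ : stirlingSeq n / (stirlingSeq k * stirlingSeq m) ≤ 1 / Real.sqrt π := by
      rw [div_le_div_iff₀ (by positivity) hsp]
      have h1 : stirlingSeq n ≤ stirlingSeq k := stirling_anti hk (by omega)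
      have h2 : Real.sqrt π ≤ stirlingSeq m := sqrt_pi_le_stirlingSeq m hm1
      nlinarith [mul_le_mul h1 h2 hsp.le spK.le]
    have h2pi : Real.sqrt (2 * π) = Real.sqrt 2 * Real.sqrt π :=
      Real.sqrt_mul (by norm_num) _
    calc (n.choose k : ℝ) = stirlingSeq n / (stirlingSeq k * stirlingSeq m) *
          (Real.sqrt ((n:ℝ)/((k:ℝ)*m)) / Real.sqrt 2) *
          Real.exp ((n:ℝ) * binEnt ((k:ℝ)/n)) := hC
      _ ≤ (1 / Real.sqrt π) * (Real.sqrt ((n:ℝ)/((k:ℝ)*m)) / Real.sqrt 2) *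
          Real.exp ((n:ℝ) * binEnt ((k:ℝ)/n)) := by gcongr
      _ = (1 / Real.sqrt (2 * π)) * Real.sqrt ((n:ℝ)/((k:ℝ)*m)) *
          Real.exp ((n:ℝ) * binEnt ((k:ℝ)/n)) := by rw [h2pi]; field_simp
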